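/- Let (Ω, P) be a probability space, n ≥ 1, and let e₁, …, eₙ : Ω → ℝ be independent square-integrable random variables with E[eᵢ] = 0 and Var(eᵢ) ≤ σ² for every i. Let w₁, …, wₙ be real numbers with wᵢ² ≤ B/n for some B > 0, and let v₁, …, vₙ ∈ ℝⁿ be vectors orthonormal with respect to the weighted inner product ⟨x, y⟩_w = ∑ᵢ wᵢ² xᵢ yᵢ, i.e. ∑ᵢ wᵢ² (v_k)ᵢ (v_l)ᵢ = δ_{kl}. Let λ > 0, c > 0 and d ∈ {1,2,3}, and let β₁, …, βₙ be real numbers with β_k ≥ c * k^{4/d} for every k. Then E[∑_{k=1}^n (1 + λ β_k)^{-1} (∑ᵢ wᵢ² eᵢ (v_k)ᵢ)²] ≤ (B σ²/n) * (4/(4-d)) * (c λ)^{-d/4}, with real powers. -/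

import Mathlib

open MeasureTheory ProbabilityTheory

open Set

lemma sum_inv_bound (μ : ℝ) (hμ : 0 < μ) (p : ℝ) (hp : 1 < p) (n : ℕ) :
    ∑ k ∈ Finset.range n, (1 + μ * ((k : ℝ) + 1) ^ p)⁻¹
      ≤ (p / (p - 1)) * μ ^ (-1 / p) := by
  set t₀ : ℝ := μ ^ (-1 / p) with ht₀def
  have ht₀ : 0 < t₀ := Real.rpow_pos_of_pos hμ _
  set g : ℝ → ℝ := fun t => min 1 (μ⁻¹ * t ^ (-p)) with hgdef
  have hgmeas : Measurable g := by
    have : Measurable fun t : ℝ => t ^ (-p) := by measurability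
    exact measurable_const.min (measurable_const.mul this)
  have hg0 : ∀ t : ℝ, 0 ≤ t → 0 ≤ g t := by
    intro t ht
    exact le_min zero_le_one (mul_nonneg (inv_nonneg.2 hμ.le) (Real.rpow_nonneg ht _))
  have hg1 : ∀ t : ℝ, g t ≤ 1 := fun t => min_le_left _ _
  have hii : ∀ k : ℕ, IntervalIntegrable g volume (k : ℝ) (k + 1) := by
    intro k
    apply IntervalIntegrable.mono_fun' (g := fun _ => (1:ℝ)) intervalIntegrable_const
      hgmeas.aestronglyMeasurable
    filter_upwards [ae_restrict_mem measurableSet_uIoc] with t ht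
    rw [Real.norm_eq_abs]
    have hk0 : (0:ℝ) ≤ (k:ℝ) := Nat.cast_nonneg k
    have h0 : (0:ℝ) ≤ t := by
      rcases Set.mem_uIoc.1 ht with h | h
      · linarith [h.1]
      · linarith [h.1]
    rw [abs_of_nonneg (hg0 t h0)]; exact hg1 t
  have hterm : ∀ k : ℕ, (1 + μ * ((k : ℝ) + 1) ^ p)⁻¹ ≤ ∫ t in (k:ℝ)..(k+1), g t := by
    intro k
    have hk1 : (0:ℝ) < (k:ℝ) + 1 := by positivity
    have hpow : 0 < ((k:ℝ)+1) ^ p := Real.rpow_pos_of_pos hk1 _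
    have hc : (1 + μ * ((k : ℝ) + 1) ^ p)⁻¹ ≤ min 1 (μ⁻¹ * ((k:ℝ)+1) ^ (-p)) := by
      refine le_min ?_ ?_
      · exact inv_le_one_of_one_le₀ (by nlinarith)
      · rw [Real.rpow_neg hk1.le, ← mul_inv]
        exact inv_anti₀ (by positivity) (by nlinarith)
    calc (1 + μ * ((k : ℝ) + 1) ^ p)⁻¹
        = ∫ _ in (k:ℝ)..(k+1), (1 + μ * ((k : ℝ) + 1) ^ p)⁻¹ := by simp
      _ ≤ ∫ t in (k:ℝ)..(k+1), g t := by
          apply intervalIntegral.integral_mono_ae_restrict (by linarith)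
            intervalIntegrable_const (hii k)
          have hne : ∀ᵐ t : ℝ ∂(volume.restrict (Icc (k:ℝ) (k+1))), t ≠ 0 := by
            refine ae_restrict_of_ae ?_
            rw [ae_iff]
            have : {t : ℝ | ¬ t ≠ 0} = {0} := by ext t; simp
            rw [this]; exact measure_singleton 0
          filter_upwards [ae_restrict_mem measurableSet_Icc, hne] with t ht htne
          have h0 : 0 < t := lt_of_le_of_ne (le_trans (Nat.cast_nonneg k) ht.1) (Ne.symm htne)
          refine le_trans hc (le_min (min_le_left _ _) ?_)
          refine le_trans (min_le_right _ _) ?_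
          exact mul_le_mul_of_nonneg_left
            (Real.rpow_le_rpow_of_nonpos h0 ht.2 (by linarith)) (inv_nonneg.2 hμ.le)
  have hsum : ∑ k ∈ Finset.range n, (1 + μ * ((k : ℝ) + 1) ^ p)⁻¹
      ≤ ∫ t in (0:ℝ)..(n:ℝ), g t := by
    have hadj := intervalIntegral.sum_integral_adjacent_intervals
      (a := fun k : ℕ => (k : ℝ)) (n := n) (f := g) (μ := volume)
      (fun k _ => by simpa using hii k)
    simp only [Nat.cast_zero, Nat.cast_add, Nat.cast_one] at hadj
    calc ∑ k ∈ Finset.range n, (1 + μ * ((k : ℝ) + 1) ^ p)⁻¹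
        ≤ ∑ k ∈ Finset.range n, ∫ t in (k:ℝ)..((k:ℝ)+1), g t :=
          Finset.sum_le_sum fun k _ => hterm k
      _ = ∫ t in (0:ℝ)..(n:ℝ), g t := hadj
  have hint_tail : IntegrableOn (fun t : ℝ => μ⁻¹ * t ^ (-p)) (Ioi t₀) :=
    (integrableOn_Ioi_rpow_of_lt (by linarith) ht₀).const_mul _
  have hint1 : IntegrableOn g (Ioc (0:ℝ) t₀) := by
    refine Integrable.mono' (g := fun _ => (1:ℝ))
      (integrableOn_const measure_Ioc_lt_top.ne) hgmeas.aestronglyMeasurable ?_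
    filter_upwards [ae_restrict_mem measurableSet_Ioc] with t ht
    rw [Real.norm_eq_abs, abs_of_nonneg (hg0 t ht.1.le)]; exact hg1 t
  have hint2 : IntegrableOn g (Ioi t₀) := by
    refine Integrable.mono' (g := fun t => μ⁻¹ * t ^ (-p)) hint_tail
      hgmeas.aestronglyMeasurable ?_
    filter_upwards [ae_restrict_mem measurableSet_Ioi] with t ht
    rw [Real.norm_eq_abs, abs_of_nonneg (hg0 t (ht₀.trans ht).le)]
    exact min_le_right _ _
  have hIoi : IntegrableOn g (Ioi (0:ℝ)) := by
    rw [← Set.Ioc_union_Ioi_eq_Ioi ht₀.le]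
    exact hint1.union hint2
  have hIocIoi : ∫ t in (0:ℝ)..(n:ℝ), g t ≤ ∫ t in Ioi (0:ℝ), g t := by
    rw [intervalIntegral.integral_of_le (by positivity)]
    refine setIntegral_mono_set hIoi ?_ (Ioc_subset_Ioi_self.eventuallyLE)
    filter_upwards [ae_restrict_mem measurableSet_Ioi] with t ht
    exact hg0 t (le_of_lt ht)
  have hsplit : ∫ t in Ioi (0:ℝ), g t
      = (∫ t in Ioc (0:ℝ) t₀, g t) + ∫ t in Ioi t₀, g t := by
    rw [← Set.Ioc_union_Ioi_eq_Ioi ht₀.le]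
    exact setIntegral_union (Set.Ioc_disjoint_Ioi le_rfl) measurableSet_Ioi hint1 hint2
  have hpiece1 : ∫ t in Ioc (0:ℝ) t₀, g t ≤ t₀ := by
    calc ∫ t in Ioc (0:ℝ) t₀, g t ≤ ∫ _ in Ioc (0:ℝ) t₀, (1:ℝ) :=
          setIntegral_mono_on hint1 (integrableOn_const measure_Ioc_lt_top.ne)
            measurableSet_Ioc (fun t _ => hg1 t)
      _ = t₀ := by
          simp [Real.volume_Ioc, ENNReal.toReal_ofReal ht₀.le, ht₀.le]
  have h3 : μ⁻¹ * t₀ ^ (1 - p) = t₀ := by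
    rw [ht₀def, ← Real.rpow_mul hμ.le,
      show μ⁻¹ = μ ^ (-(1:ℝ)) by rw [Real.rpow_neg hμ.le, Real.rpow_one],
      ← Real.rpow_add hμ]
    congr 1
    have hp0 : p ≠ 0 := by linarith
    field_simp
    ring
  have hpiece2 : ∫ t in Ioi t₀, g t ≤ t₀ / (p - 1) := by
    have h1 : ∫ t in Ioi t₀, g t ≤ ∫ t in Ioi t₀, μ⁻¹ * t ^ (-p) :=
      setIntegral_mono_on hint2 hint_tail measurableSet_Ioi
        (fun t _ => min_le_right _ _)
    have h2 : ∫ t in Ioi t₀, μ⁻¹ * t ^ (-p) = μ⁻¹ * (-t₀ ^ (-p + 1) / (-p + 1)) := by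
      rw [MeasureTheory.integral_const_mul, integral_Ioi_rpow_of_lt (by linarith) ht₀]
    have h4 : μ⁻¹ * (-t₀ ^ (-p + 1) / (-p + 1)) = t₀ / (p - 1) := by
      rw [show (-p + 1 : ℝ) = 1 - p by ring]
      rw [show (-t₀ ^ (1-p) / (1 - p)) = t₀ ^ (1-p) / (p - 1) by
        rw [show (1 - p : ℝ) = -(p-1) by ring, div_neg, neg_div, neg_neg]]
      rw [← mul_div_assoc, h3]
    rw [h2, h4] at h1
    exact h1
  have hfinal : t₀ + t₀ / (p - 1) = (p / (p - 1)) * t₀ := by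
    have hp1 : p - 1 ≠ 0 := by linarith
    field_simp
    ring
  calc ∑ k ∈ Finset.range n, (1 + μ * ((k : ℝ) + 1) ^ p)⁻¹
      ≤ ∫ t in (0:ℝ)..(n:ℝ), g t := hsum
    _ ≤ ∫ t in Ioi (0:ℝ), g t := hIocIoi
    _ = (∫ t in Ioc (0:ℝ) t₀, g t) + ∫ t in Ioi t₀, g t := hsplit
    _ ≤ t₀ + t₀ / (p - 1) := add_le_add hpiece1 hpiece2
    _ = (p / (p - 1)) * t₀ := hfinal

lemma exp_sq {Ω : Type*} [MeasurableSpace Ω] (P : Measure Ω) [IsProbabilityMeasure P]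
    {n : ℕ} (e : Fin n → Ω → ℝ)
    (hindep : iIndepFun e P)
    (hL2 : ∀ i, MemLp (e i) 2 P) (hmean : ∀ i, ∫ ω, e i ω ∂P = 0)
    (a : Fin n → ℝ) :
    ∫ ω, (∑ i, a i * e i ω) ^ 2 ∂P = ∑ i, a i ^ 2 * variance (e i) P := by
  classical
  set X : Fin n → Ω → ℝ := fun i => a i • e i with hX
  have hXL2 : ∀ i, MemLp (X i) 2 P := fun i => (hL2 i).const_smul (a i)
  have hfun : (fun ω => ∑ i, a i * e i ω) = ∑ i, X i := by
    funext ω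
    simp [hX, Finset.sum_apply, smul_eq_mul]
  have hS : MemLp (∑ i, X i) 2 P := memLp_finset_sum' _ (fun i _ => hXL2 i)
  have hmean' : ∫ ω, (∑ i, X i) ω ∂P = 0 := by
    simp only [Finset.sum_apply]
    rw [integral_finset_sum _ (fun i _ => ((hXL2 i).integrable one_le_two))]
    refine Finset.sum_eq_zero fun i _ => ?_
    simp only [hX, Pi.smul_apply, smul_eq_mul]
    rw [MeasureTheory.integral_const_mul, hmean i, mul_zero]
  have hpair : Set.Pairwise ↑(Finset.univ : Finset (Fin n))
      fun i j => IndepFun (X i) (X j) P := by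
    intro i _ j _ hij
    have h := hindep.indepFun hij
    have : X i = (fun x => a i * x) ∘ e i := by funext ω; simp [hX, smul_eq_mul]
    rw [this, show X j = (fun x => a j * x) ∘ e j by funext ω; simp [hX, smul_eq_mul]]
    exact h.comp (measurable_const_mul (a i)) (measurable_const_mul (a j))
  have hvar : variance (∑ i, X i) P = ∑ i, a i ^ 2 * variance (e i) P := by
    rw [IndepFun.variance_sum (fun i _ => hXL2 i) hpair]
    exact Finset.sum_congr rfl fun i _ => variance_smul (a i) (e i) P
  have hdef := variance_eq_sub hS
  have hsq : (fun ω => (∑ i, a i * e i ω) ^ 2) = (∑ i, X i) ^ 2 := by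
    funext ω
    rw [Pi.pow_apply]
    congr 1
    exact congrFun hfun ω
  calc ∫ ω, (∑ i, a i * e i ω) ^ 2 ∂P = ∫ ω, ((∑ i, X i) ^ 2) ω ∂P := by rw [hsq]
    _ = variance (∑ i, X i) P := by
        rw [hdef, hmean']
        norm_num
    _ = ∑ i, a i ^ 2 * variance (e i) P := hvar

/-- Combined estimate of Lemma 3.3: for independent zero-mean noises `eᵢ` with variance
at most `σ²`, weights `wᵢ² ≤ B/n`, vectors `v_k` orthonormal in the weighted inner
product `∑ᵢ wᵢ² xᵢ yᵢ`, and eigenvalues `β_k ≥ c k^{4/d}` (`d ∈ {1,2,3}`),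
`E[∑_k (1 + λβ_k)⁻¹ (∑ᵢ wᵢ² eᵢ (v_k)ᵢ)²] ≤ (Bσ²/n)·(4/(4-d))·(cλ)^{-d/4}`. -/
theorem stmt_16 {Ω : Type*} [MeasurableSpace Ω] (P : Measure Ω) [IsProbabilityMeasure P]
    (n : ℕ) (hn : 1 ≤ n) (e : Fin n → Ω → ℝ)
    (hmeas : ∀ i, Measurable (e i))
    (hindep : iIndepFun e P)
    (hL2 : ∀ i, MemLp (e i) 2 P)
    (hmean : ∀ i, ∫ ω, e i ω ∂P = 0)
    (σ : ℝ) (hvar : ∀ i, variance (e i) P ≤ σ ^ 2)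
    (w : Fin n → ℝ) (B : ℝ) (hB : 0 < B)
    (hw : ∀ i, w i ^ 2 ≤ B / n)
    (v : Fin n → Fin n → ℝ)
    (hortho : ∀ k l : Fin n,
      ∑ i, w i ^ 2 * v k i * v l i = if k = l then (1 : ℝ) else 0)
    (lam c : ℝ) (hlam : 0 < lam) (hc : 0 < c)
    (d : ℕ) (hd : d = 1 ∨ d = 2 ∨ d = 3)
    (β : Fin n → ℝ)
    (hβ : ∀ k : Fin n, c * ((k : ℕ) + 1 : ℝ) ^ ((4 : ℝ) / d) ≤ β k) :
    ∫ ω, (∑ k, (1 + lam * β k)⁻¹ * (∑ i, w i ^ 2 * e i ω * v k i) ^ 2) ∂P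
      ≤ (B * σ ^ 2 / n) * (4 / (4 - (d : ℝ))) * (c * lam) ^ (-(d : ℝ) / 4) := by
  classical
  set p : ℝ := (4 : ℝ) / d with hpdef
  have hp : 1 < p := by rcases hd with h | h | h <;> subst h <;> norm_num [hpdef]
  have hμ : 0 < c * lam := mul_pos hc hlam
  have hn' : (0:ℝ) < n := by exact_mod_cast hn
  -- coefficient vectors
  set a : Fin n → Fin n → ℝ := fun k i => w i ^ 2 * v k i with hadef
  -- positivity of denominators
  have hden : ∀ k : Fin n, 0 < 1 + lam * β k := by
    intro k
    have h1 : 0 < c * (((k : ℕ) : ℝ) + 1) ^ p := by positivity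
    have h2 := hβ k
    nlinarith
  -- rewrite integrand
  have hrw : ∀ (ω : Ω) (k : Fin n),
      (∑ i, w i ^ 2 * e i ω * v k i) = ∑ i, a k i * e i ω := by
    intro ω k
    exact Finset.sum_congr rfl fun i _ => by simp [hadef]; ring
  -- integrability of each k-term
  have hXL2 : ∀ k : Fin n, MemLp (fun ω => ∑ i, a k i * e i ω) 2 P := by
    intro k
    have : MemLp (∑ i, a k i • e i) 2 P :=
      memLp_finset_sum' _ (fun i _ => (hL2 i).const_smul (a k i))
    convert this using 1
    funext ω
    simp [Finset.sum_apply, smul_eq_mul]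
  have hint : ∀ k : Fin n, Integrable
      (fun ω => (1 + lam * β k)⁻¹ * (∑ i, w i ^ 2 * e i ω * v k i) ^ 2) P := by
    intro k
    have h1 : Integrable (fun ω => (∑ i, a k i * e i ω) ^ 2) P := (hXL2 k).integrable_sq
    have h2 := h1.const_mul (1 + lam * β k)⁻¹
    refine h2.congr (Filter.Eventually.of_forall fun ω => ?_)
    simp only []
    rw [hrw ω k]
  -- expectation of each square
  have hE : ∀ k : Fin n,
      ∫ ω, (∑ i, w i ^ 2 * e i ω * v k i) ^ 2 ∂P ≤ B * σ ^ 2 / n := by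
    intro k
    have heq : ∫ ω, (∑ i, w i ^ 2 * e i ω * v k i) ^ 2 ∂P
        = ∑ i, (a k i) ^ 2 * variance (e i) P := by
      rw [show (fun ω => (∑ i, w i ^ 2 * e i ω * v k i) ^ 2)
          = fun ω => (∑ i, a k i * e i ω) ^ 2 by funext ω; rw [hrw ω k]]
      exact exp_sq P e hindep hL2 hmean (a k)
    rw [heq]
    have hBn : (0:ℝ) ≤ B / n := by positivity
    calc ∑ i, (a k i) ^ 2 * variance (e i) P
        ≤ ∑ i, (B / n * σ ^ 2) * (w i ^ 2 * v k i * v k i) := by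
          refine Finset.sum_le_sum fun i _ => ?_
          have h1 := hvar i
          have h2 := variance_nonneg (e i) P
          have h3 := hw i
          have h4 : (0:ℝ) ≤ w i ^ 2 := sq_nonneg _
          have key : w i ^ 2 * variance (e i) P ≤ B / n * σ ^ 2 :=
            mul_le_mul h3 h1 h2 hBn
          have heq2 : (a k i) ^ 2 * variance (e i) P
              = (w i ^ 2 * variance (e i) P) * (w i ^ 2 * (v k i) ^ 2) := by
            simp [hadef]; ring
          have heq3 : (B / n * σ ^ 2) * (w i ^ 2 * v k i * v k i)
              = (B / n * σ ^ 2) * (w i ^ 2 * (v k i) ^ 2) := by ring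
          rw [heq2, heq3]
          exact mul_le_mul_of_nonneg_right key (by positivity)
      _ = (B / n * σ ^ 2) * ∑ i, w i ^ 2 * v k i * v k i := by
          rw [Finset.mul_sum]
      _ = B * σ ^ 2 / n := by
          rw [hortho k k, if_pos rfl, mul_one]; ring
  -- main chain
  have hconst : (0:ℝ) ≤ B * σ ^ 2 / n := by positivity
  have hinv_nonneg : ∀ k : Fin n, (0:ℝ) ≤ (1 + lam * β k)⁻¹ :=
    fun k => (inv_nonneg).2 (hden k).le
  calc ∫ ω, (∑ k, (1 + lam * β k)⁻¹ * (∑ i, w i ^ 2 * e i ω * v k i) ^ 2) ∂P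
      = ∑ k, ∫ ω, (1 + lam * β k)⁻¹ * (∑ i, w i ^ 2 * e i ω * v k i) ^ 2 ∂P :=
        integral_finset_sum _ (fun k _ => hint k)
    _ = ∑ k, (1 + lam * β k)⁻¹ * ∫ ω, (∑ i, w i ^ 2 * e i ω * v k i) ^ 2 ∂P := by
        exact Finset.sum_congr rfl fun k _ => MeasureTheory.integral_const_mul _ _
    _ ≤ ∑ k, (1 + lam * β k)⁻¹ * (B * σ ^ 2 / n) := by
        refine Finset.sum_le_sum fun k _ => ?_
        exact mul_le_mul_of_nonneg_left (hE k) (hinv_nonneg k)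
    _ = (B * σ ^ 2 / n) * ∑ k, (1 + lam * β k)⁻¹ := by
        rw [Finset.mul_sum]; exact Finset.sum_congr rfl fun k _ => by ring
    _ ≤ (B * σ ^ 2 / n) * ((p / (p - 1)) * (c * lam) ^ (-1 / p)) := by
        refine mul_le_mul_of_nonneg_left ?_ hconst
        calc ∑ k : Fin n, (1 + lam * β k)⁻¹
            ≤ ∑ k : Fin n, (1 + (c * lam) * (((k:ℕ):ℝ) + 1) ^ p)⁻¹ := by
              refine Finset.sum_le_sum fun k _ => ?_
              refine inv_anti₀ (by positivity) ?_
              have := hβ k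
              nlinarith [hlam]
          _ = ∑ k ∈ Finset.range n, (1 + (c * lam) * ((k:ℝ) + 1) ^ p)⁻¹ :=
              Fin.sum_univ_eq_sum_range (fun m => (1 + (c * lam) * ((m:ℝ) + 1) ^ p)⁻¹) n
          _ ≤ (p / (p - 1)) * (c * lam) ^ (-1 / p) := sum_inv_bound _ hμ p hp n
    _ = (B * σ ^ 2 / n) * (4 / (4 - (d : ℝ))) * (c * lam) ^ (-(d : ℝ) / 4) := by
        have hpp : p / (p - 1) = 4 / (4 - (d : ℝ)) := by
          rcases hd with h | h | h <;> subst h <;> norm_num [hpdef]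
        have hexp : (-1 : ℝ) / p = -(d : ℝ) / 4 := by
          rcases hd with h | h | h <;> subst h <;> norm_num [hpdef]
        rw [hpp, hexp, mul_assoc]
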